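/- Let X be a finite set, let k ≥ 1, and let H be a finite family of subsets of X, each of cardinality at least k. If |H| < 2^{k−1}, then there exists a 2-coloring c : X → {0, 1} such that no member of H is monochromatic, i.e., every A ∈ H contains both an element colored 0 and an element colored 1. -/

import Mathlib

lemma mono_count {X : Type*} [Fintype X] [DecidableEq X] (A : Finset X) (v : Fin 2) :
    ((Finset.univ : Finset (X → Fin 2)).filter (fun c => ∀ x ∈ A, c x = v)).card
      ≤ 2 ^ (Fintype.card X - A.card) := by
  have h := Finset.card_le_card_of_injOn
    (s := (Finset.univ : Finset (X → Fin 2)).filter (fun c => ∀ x ∈ A, c x = v))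
    (f := fun (c : X → Fin 2) => (fun x : {x // x ∈ Aᶜ} => c x.1))
    (t := (Finset.univ : Finset ({x // x ∈ Aᶜ} → Fin 2)))
    (fun c _ => Finset.mem_univ _) ?_
  · calc _ ≤ _ := h
    _ = 2 ^ (Aᶜ : Finset X).card := by
        simp [Fintype.card_fun, Finset.card_compl]
    _ = 2 ^ (Fintype.card X - A.card) := by rw [Finset.card_compl]
  · intro c hc c' hc' hcc
    simp only [Finset.mem_coe, Finset.mem_filter] at hc hc'
    funext x
    by_cases hx : x ∈ A
    · rw [hc.2 x hx, hc'.2 x hx]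
    · exact congrFun hcc ⟨x, by simpa using hx⟩

/-- Erdős's bound for Property B: a family of fewer than `2^(k−1)` sets, each of size at least
`k`, admits a 2-coloring of the ground set with no monochromatic set. -/
theorem propertyB_of_small_family {X : Type*} [Fintype X] [DecidableEq X]
    (k : ℕ) (hk : 1 ≤ k) (H : Finset (Finset X))
    (hsize : ∀ A ∈ H, k ≤ A.card)
    (hcard : H.card < 2 ^ (k - 1)) :
    ∃ c : X → Fin 2, ∀ A ∈ H, (∃ x ∈ A, c x = 0) ∧ (∃ x ∈ A, c x = 1) := by
  rcases H.eq_empty_or_nonempty with rfl | ⟨A0, hA0⟩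
  · exact ⟨fun _ => 0, by simp⟩
  set n := Fintype.card X with hn
  have hkn : k ≤ n := le_trans (hsize A0 hA0) (Finset.card_le_card (Finset.subset_univ A0) |>.trans_eq (by simp [hn]))
  classical
  set bad : Finset X → Finset (X → Fin 2) := fun A =>
    Finset.univ.filter (fun c => (∀ x ∈ A, c x = 0) ∨ (∀ x ∈ A, c x = 1)) with hbad
  have hbadcard : ∀ A ∈ H, (bad A).card ≤ 2 ^ (n - k + 1) := by
    intro A hA
    have hsub : bad A ⊆ Finset.univ.filter (fun c => ∀ x ∈ A, c x = 0)
        ∪ Finset.univ.filter (fun c => ∀ x ∈ A, c x = 1) := by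
      intro c hc
      simp only [hbad, Finset.mem_filter, Finset.mem_union] at hc ⊢
      tauto
    calc (bad A).card ≤ _ := Finset.card_le_card hsub
      _ ≤ _ := Finset.card_union_le _ _
      _ ≤ 2 ^ (n - A.card) + 2 ^ (n - A.card) := by
          exact Nat.add_le_add (mono_count A 0) (mono_count A 1)
      _ = 2 ^ (n - A.card + 1) := by ring
      _ ≤ 2 ^ (n - k + 1) := by
          apply Nat.pow_le_pow_right (by norm_num)
          have := hsize A hA
          omega
  set S : Finset (X → Fin 2) := H.biUnion bad with hS
  have hScard : S.card < 2 ^ n := by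
    calc S.card ≤ ∑ A ∈ H, (bad A).card := Finset.card_biUnion_le
      _ ≤ ∑ _A ∈ H, 2 ^ (n - k + 1) := Finset.sum_le_sum hbadcard
      _ = H.card * 2 ^ (n - k + 1) := by rw [Finset.sum_const, smul_eq_mul]
      _ < 2 ^ (k - 1) * 2 ^ (n - k + 1) := by
          exact Nat.mul_lt_mul_of_lt_of_le hcard le_rfl (by positivity)
      _ = 2 ^ n := by
          rw [← pow_add]
          congr 1
          omega
  have : S ≠ Finset.univ := by
    intro h
    rw [h, Finset.card_univ] at hScard
    simp [Fintype.card_fun] at hScard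
    rw [← hn] at hScard; exact lt_irrefl _ hScard
  obtain ⟨c, hc⟩ : ∃ c, c ∉ S := by
    by_contra h
    push_neg at h
    exact this (Finset.eq_univ_of_forall h)
  refine ⟨c, fun A hA => ?_⟩
  have hcA : c ∉ bad A := fun h => hc (Finset.mem_biUnion.mpr ⟨A, hA, h⟩)
  simp only [hbad, Finset.mem_filter, Finset.mem_univ, true_and, not_or, not_forall] at hcA
  obtain ⟨⟨x, hx, hx0⟩, ⟨y, hy, hy1⟩⟩ := hcA
  refine ⟨⟨y, hy, ?_⟩, ⟨x, hx, ?_⟩⟩ <;> omega
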